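/- In CCS⁻ (CCS without restriction), if R is a weak bisimulation up-to context, then R is contained in weak bisimilarity: P R Q implies P ≈ Q. -/

import Mathlib

/-- Processes of CCS⁻ (CCS without restriction): 0, input prefix, output prefix,
    parallel composition, replication. Names are natural numbers. -/
inductive Proc : Type where
  | nil : Proc
  | inp : ℕ → Proc → Proc
  | out : ℕ → Proc → Proc
  | par : Proc → Proc → Proc
  | bang : Proc → Proc

/-- Actions: input `a`, output `ā`, or the internal action `τ`. -/
inductive Act : Type where
  | inp : ℕ → Act
  | out : ℕ → Act
  | tau : Act

/-- The labelled transition relation of CCS⁻. -/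
inductive Step : Proc → Act → Proc → Prop where
  | inp (a : ℕ) (P : Proc) : Step (.inp a P) (.inp a) P
  | out (a : ℕ) (P : Proc) : Step (.out a P) (.out a) P
  | comL {a : ℕ} {P P' Q Q' : Proc} :
      Step P (.out a) P' → Step Q (.inp a) Q' → Step (.par P Q) .tau (.par P' Q')
  | comR {a : ℕ} {P P' Q Q' : Proc} :
      Step P (.out a) P' → Step Q (.inp a) Q' → Step (.par Q P) .tau (.par Q' P')
  | parL {α : Act} {P P' : Proc} (Q : Proc) :
      Step P α P' → Step (.par P Q) α (.par P' Q)
  | parR {α : Act} {P P' : Proc} (Q : Proc) :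
      Step P α P' → Step (.par Q P) α (.par Q P')
  | bang {α : Act} {P P' : Proc} :
      Step P α P' → Step (.bang P) α (.par P' (.bang P))
  | bangCom {a : ℕ} {P P' P'' : Proc} :
      Step P (.inp a) P' → Step P (.out a) P'' →
      Step (.bang P) .tau (.par P' (.par P'' (.bang P)))

/-- A single τ-transition. -/
def TauStep (P Q : Proc) : Prop := Step P .tau Q

/-- `P ⟹ Q`: reflexive–transitive closure of τ-transitions. -/
def Taus : Proc → Proc → Prop := Relation.ReflTransGen TauStep

/-- `P ⟹α Q`: `P ⟹ ⟶α ⟹ Q`. -/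
def WeakStep (P : Proc) (α : Act) (Q : Proc) : Prop :=
  ∃ P₁ P₂, Taus P P₁ ∧ Step P₁ α P₂ ∧ Taus P₂ Q

/-- `P ⟹α̂ Q`: `P ⟹ Q` if `α = τ`, and `P ⟹α Q` otherwise. -/
def WeakHat (P : Proc) (α : Act) (Q : Proc) : Prop :=
  match α with
  | .tau => Taus P Q
  | _ => WeakStep P α Q

/-- `P ⟶τ^k Q`: exactly `k` consecutive τ-transitions. -/
def TauN : Proc → ℕ → Proc → Prop
  | P, 0, Q => P = Q
  | P, n + 1, Q => ∃ P₁, TauStep P P₁ ∧ TauN P₁ n Q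

/-- `P` is divergent: there is an infinite sequence of τ-transitions from `P`. -/
def Divergent (P : Proc) : Prop :=
  ∃ f : ℕ → Proc, f 0 = P ∧ ∀ n, TauStep (f n) (f (n + 1))

/-- A relation is divergence-sensitive if related processes diverge together. -/
def DivSensitive (R : Proc → Proc → Prop) : Prop :=
  ∀ P Q, R P Q → (Divergent P ↔ Divergent Q)

/-- Weak bisimulation (symmetric, divergence-sensitive). -/
def IsWeakBisim (R : Proc → Proc → Prop) : Prop :=
  Symmetric R ∧ DivSensitive R ∧
    ∀ P Q, R P Q → ∀ α P', Step P α P' → ∃ Q', WeakHat Q α Q' ∧ R P' Q'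

/-- `P ≈ Q`: weak bisimilarity. -/
def WBisim (P Q : Proc) : Prop := ∃ R, IsWeakBisim R ∧ R P Q

/-- Strong bisimulation (symmetric, divergence-sensitive). -/
def IsStrongBisim (R : Proc → Proc → Prop) : Prop :=
  Symmetric R ∧ DivSensitive R ∧
    ∀ P Q, R P Q → ∀ α P', Step P α P' → ∃ Q', Step Q α Q' ∧ R P' Q'

/-- `P ~ Q`: strong bisimilarity. -/
def SBisim (P Q : Proc) : Prop := ∃ R, IsStrongBisim R ∧ R P Q

/-- Structural congruence: the smallest congruence with `P|0 ≡ P`,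
    `P|(Q|R) ≡ (P|Q)|R`, `P|Q ≡ Q|P`. -/
inductive SC : Proc → Proc → Prop where
  | refl (P : Proc) : SC P P
  | symm {P Q : Proc} : SC P Q → SC Q P
  | trans {P Q R : Proc} : SC P Q → SC Q R → SC P R
  | inp (a : ℕ) {P Q : Proc} : SC P Q → SC (.inp a P) (.inp a Q)
  | out (a : ℕ) {P Q : Proc} : SC P Q → SC (.out a P) (.out a Q)
  | par {P P' Q Q' : Proc} : SC P P' → SC Q Q' → SC (.par P Q) (.par P' Q')
  | bang {P Q : Proc} : SC P Q → SC (.bang P) (.bang Q)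
  | parNil (P : Proc) : SC (.par P .nil) P
  | parAssoc (P Q R : Proc) : SC (.par P (.par Q R)) (.par (.par P Q) R)
  | parComm (P Q : Proc) : SC (.par P Q) (.par Q P)

/-- Contexts: process terms with a single hole. -/
inductive Ctx : Type where
  | hole : Ctx
  | inp : ℕ → Ctx → Ctx
  | out : ℕ → Ctx → Ctx
  | parL : Ctx → Proc → Ctx
  | parR : Proc → Ctx → Ctx
  | bang : Ctx → Ctx

/-- `C.fill P`: the process `C[P]`. -/
def Ctx.fill : Ctx → Proc → Proc
  | .hole, P => P
  | .inp a C, P => .inp a (C.fill P)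
  | .out a C, P => .out a (C.fill P)
  | .parL C Q, P => .par (C.fill P) Q
  | .parR Q C, P => .par Q (C.fill P)
  | .bang C, P => .bang (C.fill P)

/-- Weak bisimulation up-to context. -/
def IsWeakBisimUptoCtx (R : Proc → Proc → Prop) : Prop :=
  Symmetric R ∧ DivSensitive R ∧
    ∀ P Q, R P Q → ∀ α P', Step P α P' →
      ∃ Q', WeakHat Q α Q' ∧
        ∃ (C : Ctx) (P₁ Q₁ : Proc), SC P' (C.fill P₁) ∧ SC Q' (C.fill Q₁) ∧ R P₁ Q₁

/-- Quasi-strong bisimulation: visible actions are matched by `⟹ ⟶α`,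
    τ-actions are matched by a single τ. -/
def IsQSBisim (R : Proc → Proc → Prop) : Prop :=
  Symmetric R ∧ DivSensitive R ∧
    ∀ P Q, R P Q →
      (∀ α P', Step P α P' → α ≠ .tau →
          ∃ Q₁ Q', Taus Q Q₁ ∧ Step Q₁ α Q' ∧ R P' Q') ∧
      (∀ P', Step P .tau P' → ∃ Q', Step Q .tau Q' ∧ R P' Q')

/-- `P ≃qs Q`: quasi-strong bisimilarity. -/
def QSBisim (P Q : Proc) : Prop := ∃ R, IsQSBisim R ∧ R P Q

/-- Quasi-strong branching bisimulation. -/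
def IsQSBBisim (R : Proc → Proc → Prop) : Prop :=
  Symmetric R ∧ DivSensitive R ∧
    ∀ P Q, R P Q →
      (∀ α P', Step P α P' → α ≠ .tau →
          ∃ Q'' Q', Taus Q Q'' ∧ Step Q'' α Q' ∧ R P Q'' ∧ R P' Q') ∧
      (∀ P', Step P .tau P' → ∃ Q', Step Q .tau Q' ∧ R P' Q')

/-- `P ≃qsb Q`: quasi-strong branching bisimilarity. -/
def QSBBisim (P Q : Proc) : Prop := ∃ R, IsQSBBisim R ∧ R P Q

/-- Branching bisimulation (divergence-sensitive). -/
def IsBrBisim (R : Proc → Proc → Prop) : Prop :=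
  Symmetric R ∧ DivSensitive R ∧
    ∀ P Q, R P Q → ∀ α P', Step P α P' →
      (α = .tau ∧ R P' Q) ∨
      ∃ Q'' Q', Taus Q Q'' ∧ Step Q'' α Q' ∧ R P Q'' ∧ R P' Q'

/-- `P ≃b Q`: branching bisimilarity. -/
def BrBisim (P Q : Proc) : Prop := ∃ R, IsBrBisim R ∧ R P Q

/-- τ-sequences all of whose steps are state-preserving. -/
def PresTaus : Proc → Proc → Prop :=
  Relation.ReflTransGen (fun P Q => TauStep P Q ∧ WBisim P Q)

/-- `Stab P k`: `P` reaches in exactly `k` τ-steps a process all of whose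
    τ-derivatives are weakly bisimilar to it. -/
def Stab (P : Proc) (k : ℕ) : Prop :=
  ∃ P', TauN P k P' ∧ ∀ P'', Taus P' P'' → WBisim P' P''

/-! ### Auxiliary development for STATEMENT 0 -/

namespace UPC

open Relation

/-- Flipped τ-step, for accessibility arguments. -/
def rt (a b : Proc) : Prop := TauStep b a

/-- Flipped transitive closure of τ-steps. -/
def rtg (a b : Proc) : Prop := Relation.TransGen TauStep b a

lemma taus_parL {u u'} (w : Proc) (h : Taus u u') : Taus (.par u w) (.par u' w) :=
  Relation.ReflTransGen.lift (p := TauStep) (fun z => Proc.par z w) (fun _ _ hab => Step.parL w hab) _ _ h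

lemma taus_parR (w : Proc) {u u'} (h : Taus u u') : Taus (.par w u) (.par w u') :=
  Relation.ReflTransGen.lift (p := TauStep) (fun z => Proc.par w z) (fun _ _ hab => Step.parR w hab) _ _ h

lemma tg_parL {u u'} (w : Proc) (h : Relation.TransGen TauStep u u') :
    Relation.TransGen TauStep (.par u w) (.par u' w) :=
  Relation.TransGen.lift (p := TauStep) (fun z => Proc.par z w) (fun _ _ hab => Step.parL w hab) _ _ h

lemma tg_parR (w : Proc) {u u'} (h : Relation.TransGen TauStep u u') :
    Relation.TransGen TauStep (.par w u) (.par w u') :=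
  Relation.TransGen.lift (p := TauStep) (fun z => Proc.par w z) (fun _ _ hab => Step.parR w hab) _ _ h

lemma wk_parL {u u' α} (w : Proc) (h : WeakStep u α u') : WeakStep (.par u w) α (.par u' w) := by
  obtain ⟨p1, p2, h1, h2, h3⟩ := h
  exact ⟨_, _, taus_parL w h1, Step.parL w h2, taus_parL w h3⟩

lemma wk_parR (w : Proc) {u u' α} (h : WeakStep u α u') : WeakStep (.par w u) α (.par w u') := by
  obtain ⟨p1, p2, h1, h2, h3⟩ := h
  exact ⟨_, _, taus_parR w h1, Step.parR w h2, taus_parR w h3⟩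

/-- Communication of two weak visible steps yields a nonempty τ-sequence (left out). -/
lemma tg_com_out_in {A A' B B' : Proc} {a} (hA : WeakStep A (.out a) A')
    (hB : WeakStep B (.inp a) B') :
    Relation.TransGen TauStep (.par A B) (.par A' B') := by
  obtain ⟨a1, a2, ha1, ha2, ha3⟩ := hA
  obtain ⟨b1, b2, hb1, hb2, hb3⟩ := hB
  have t1 : Taus (.par A B) (.par a1 b1) := (taus_parL B ha1).trans (taus_parR a1 hb1)
  have s : TauStep (.par a1 b1) (.par a2 b2) := Step.comL ha2 hb2
  have t2 : Taus (.par a2 b2) (.par A' B') := (taus_parL b2 ha3).trans (taus_parR A' hb3)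
  exact Relation.TransGen.trans_right t1 (Relation.TransGen.head' s t2)

/-- Communication of two weak visible steps (left in). -/
lemma tg_com_in_out {A A' B B' : Proc} {a} (hA : WeakStep A (.inp a) A')
    (hB : WeakStep B (.out a) B') :
    Relation.TransGen TauStep (.par A B) (.par A' B') := by
  obtain ⟨a1, a2, ha1, ha2, ha3⟩ := hA
  obtain ⟨b1, b2, hb1, hb2, hb3⟩ := hB
  have t1 : Taus (.par A B) (.par a1 b1) := (taus_parL B ha1).trans (taus_parR a1 hb1)
  have s : TauStep (.par a1 b1) (.par a2 b2) := Step.comR hb2 ha2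
  have t2 : Taus (.par a2 b2) (.par A' B') := (taus_parL b2 ha3).trans (taus_parR A' hb3)
  exact Relation.TransGen.trans_right t1 (Relation.TransGen.head' s t2)

/-! ### Divergence and accessibility -/

lemma div_not_acc {P} (h : Divergent P) : ¬ Acc rt P := by
  obtain ⟨f, h0, hs⟩ := h
  intro hacc
  have key : ∀ x, Acc rt x → ∀ n, f n = x → False := by
    intro x hx
    induction hx with
    | intro x _ ih =>
      intro n hn
      exact ih (f (n + 1)) (show rt (f (n+1)) x from hn ▸ hs n) (n + 1) rfl
  exact key P hacc 0 h0

lemma not_acc_succ {x} (hx : ¬ Acc rt x) : ∃ y, TauStep x y ∧ ¬ Acc rt y := by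
  by_contra hc
  push_neg at hc
  exact hx ⟨x, fun y hy => hc y hy⟩

noncomputable def dstep : {z : Proc // ¬ Acc rt z} → {z : Proc // ¬ Acc rt z} := fun z =>
  ⟨(not_acc_succ z.2).choose, (not_acc_succ z.2).choose_spec.2⟩

lemma dstep_spec (z : {z : Proc // ¬ Acc rt z}) : TauStep z.1 (dstep z).1 :=
  (not_acc_succ z.2).choose_spec.1

lemma div_of_not_acc {P} (h : ¬ Acc rt P) : Divergent P := by
  refine ⟨fun n => (dstep^[n] ⟨P, h⟩).1, rfl, fun n => ?_⟩
  show TauStep (dstep^[n] ⟨P, h⟩).1 (dstep^[n+1] ⟨P, h⟩).1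
  rw [Function.iterate_succ_apply' dstep n _]
  exact dstep_spec _

lemma div_iff_not_acc {P} : Divergent P ↔ ¬ Acc rt P :=
  ⟨div_not_acc, div_of_not_acc⟩

lemma acc_of_not_div {P} (h : ¬ Divergent P) : Acc rt P := by
  by_contra hc; exact h (div_of_not_acc hc)

lemma div_head {P} (h : Divergent P) : ∃ P', TauStep P P' ∧ Divergent P' := by
  obtain ⟨f, h0, hs⟩ := h
  exact ⟨f 1, h0 ▸ hs 0, ⟨fun n => f (n + 1), rfl, fun n => hs (n + 1)⟩⟩

/-- Accessibility pulls back along simulations. -/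
lemma acc_sim {T : Proc → Proc → Prop}
    (hT : ∀ u v u', T u v → TauStep u u' → ∃ v', TauStep v v' ∧ T u' v') :
    ∀ {v}, Acc rt v → ∀ u, T u v → Acc rt u := by
  intro v hv
  induction hv with
  | intro v _ ih =>
    intro u hu
    constructor
    intro u' hu'
    obtain ⟨v', hs, hT'⟩ := hT u v u' hu hu'
    exact ih v' hs u' hT'

lemma div_sim {T : Proc → Proc → Prop}
    (hT : ∀ u v u', T u v → TauStep u u' → ∃ v', TauStep v v' ∧ T u' v')
    {u v} (huv : T u v) (hd : Divergent u) : Divergent v := by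
  rw [div_iff_not_acc] at hd ⊢
  exact fun hacc => hd (acc_sim hT hacc u huv)

lemma div_parL_lift {u} (w : Proc) (h : Divergent u) : Divergent (.par u w) :=
  div_sim (T := fun a b => b = Proc.par a w)
    (fun a _ a' hb hs => ⟨.par a' w, hb ▸ Step.parL w hs, rfl⟩) rfl h

lemma div_parR_lift (w : Proc) {u} (h : Divergent u) : Divergent (.par w u) :=
  div_sim (T := fun a b => b = Proc.par w a)
    (fun a _ a' hb hs => ⟨.par w a', hb ▸ Step.parR w hs, rfl⟩) rfl h

lemma acc_taus {y y'} (h : Acc rt y) (ht : Taus y y') : Acc rt y' := by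
  induction ht with
  | refl => exact h
  | tail _ h2 ih => exact ih.inv h2

lemma not_div_taus {y y'} (h : ¬ Divergent y) (ht : Taus y y') : ¬ Divergent y' := by
  intro hd
  exact (div_not_acc hd) (acc_taus (acc_of_not_div h) ht)

lemma acc_transGen' {y} (h : Acc rt y) : Acc rtg y := by
  induction h with
  | intro x _ ih =>
    constructor
    intro y hy
    obtain ⟨c, h1, h2⟩ := Relation.TransGen.head'_iff.mp hy
    rcases Relation.reflTransGen_iff_eq_or_transGen.mp h2 with heq | htg
    · exact heq ▸ ih c h1
    · exact (ih c h1).inv htg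

/-- Pumping: a predicate closed under nonempty τ-progress implies divergence. -/
lemma div_pump {X : Proc → Prop}
    (hX : ∀ z, X z → ∃ z', Relation.TransGen TauStep z z' ∧ X z') :
    ∀ z, X z → Divergent z := by
  have key : ∀ z, Acc rtg z → X z → False := by
    intro z h
    induction h with
    | intro x _ ih =>
      intro hx
      obtain ⟨z', htg, hX'⟩ := hX x hx
      exact ih z' htg hX'
  intro z hz
  rw [div_iff_not_acc]
  intro hacc
  exact key z (acc_transGen' hacc) hz

/-! ### Extended structural congruence (with replication unfolding) is a strong bisimulation -/

/-- Structural congruence extended with `!P ≡ P | !P`. -/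
inductive SCB : Proc → Proc → Prop where
  | refl (P) : SCB P P
  | symm {P Q} : SCB P Q → SCB Q P
  | trans {P Q R} : SCB P Q → SCB Q R → SCB P R
  | inp (a : ℕ) {P Q} : SCB P Q → SCB (.inp a P) (.inp a Q)
  | out (a : ℕ) {P Q} : SCB P Q → SCB (.out a P) (.out a Q)
  | par {P P' Q Q'} : SCB P P' → SCB Q Q' → SCB (.par P Q) (.par P' Q')
  | bang {P Q} : SCB P Q → SCB (.bang P) (.bang Q)
  | parNil (P) : SCB (.par P .nil) P
  | parAssoc (P Q R) : SCB (.par P (.par Q R)) (.par (.par P Q) R)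
  | parComm (P Q) : SCB (.par P Q) (.par Q P)
  | bangUnf (P) : SCB (.bang P) (.par P (.bang P))

lemma sc_scb {P Q} (h : SC P Q) : SCB P Q := by
  induction h with
  | refl P => exact .refl P
  | symm _ ih => exact .symm ih
  | trans _ _ ih1 ih2 => exact .trans ih1 ih2
  | inp a _ ih => exact .inp a ih
  | out a _ ih => exact .out a ih
  | par _ _ ih1 ih2 => exact .par ih1 ih2
  | bang _ ih => exact .bang ih
  | parNil P => exact .parNil P
  | parAssoc P Q R => exact .parAssoc P Q R
  | parComm P Q => exact .parComm P Q

/-- Swap the first two components of a right-nested triple, up to `SCB`. -/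
lemma scb_swap3 (A B X : Proc) : SCB (.par A (.par B X)) (.par B (.par A X)) :=
  .trans (.parAssoc A B X) (.trans (.par (.parComm A B) (.refl X)) (.symm (.parAssoc B A X)))

lemma scb_step_both {P Q} (h : SCB P Q) :
    (∀ α P', Step P α P' → ∃ Q', Step Q α Q' ∧ SCB P' Q') ∧
    (∀ α Q', Step Q α Q' → ∃ P', Step P α P' ∧ SCB P' Q') := by
  induction h with
  | refl P => exact ⟨fun α P' hs => ⟨P', hs, .refl _⟩, fun α Q' hs => ⟨Q', hs, .refl _⟩⟩
  | symm _ ih =>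
    exact ⟨fun α P' hs => (ih.2 α P' hs).imp (fun _ h => ⟨h.1, .symm h.2⟩),
           fun α Q' hs => (ih.1 α Q' hs).imp (fun _ h => ⟨h.1, .symm h.2⟩)⟩
  | trans _ _ ih1 ih2 =>
    refine ⟨fun α P' hs => ?_, fun α Q' hs => ?_⟩
    · obtain ⟨M, hM, hc⟩ := ih1.1 α P' hs
      obtain ⟨N, hN, hc'⟩ := ih2.1 α M hM
      exact ⟨N, hN, .trans hc hc'⟩
    · obtain ⟨M, hM, hc⟩ := ih2.2 α Q' hs
      obtain ⟨N, hN, hc'⟩ := ih1.2 α M hM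
      exact ⟨N, hN, .trans hc' hc⟩
  | @inp a P Q h _ =>
    refine ⟨fun α P' hs => ?_, fun α Q' hs => ?_⟩
    · cases hs; exact ⟨Q, Step.inp a Q, h⟩
    · cases hs; exact ⟨P, Step.inp a P, h⟩
  | @out a P Q h _ =>
    refine ⟨fun α P' hs => ?_, fun α Q' hs => ?_⟩
    · cases hs; exact ⟨Q, Step.out a Q, h⟩
    · cases hs; exact ⟨P, Step.out a P, h⟩
  | @par P P' Q Q' h1 h2 ih1 ih2 =>
    refine ⟨fun α x hs => ?_, fun α x hs => ?_⟩
    · cases hs with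
      | comL hl hr =>
        obtain ⟨M, hM, hc⟩ := ih1.1 _ _ hl
        obtain ⟨N, hN, hc'⟩ := ih2.1 _ _ hr
        exact ⟨.par M N, Step.comL hM hN, .par hc hc'⟩
      | comR hl hr =>
        obtain ⟨M, hM, hc⟩ := ih2.1 _ _ hl
        obtain ⟨N, hN, hc'⟩ := ih1.1 _ _ hr
        exact ⟨.par N M, Step.comR hM hN, .par hc' hc⟩
      | parL _ hl =>
        obtain ⟨M, hM, hc⟩ := ih1.1 _ _ hl
        exact ⟨.par M Q', Step.parL _ hM, .par hc h2⟩
      | parR _ hr =>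
        obtain ⟨N, hN, hc⟩ := ih2.1 _ _ hr
        exact ⟨.par P' N, Step.parR _ hN, .par h1 hc⟩
    · cases hs with
      | comL hl hr =>
        obtain ⟨M, hM, hc⟩ := ih1.2 _ _ hl
        obtain ⟨N, hN, hc'⟩ := ih2.2 _ _ hr
        exact ⟨.par M N, Step.comL hM hN, .par hc hc'⟩
      | comR hl hr =>
        obtain ⟨M, hM, hc⟩ := ih2.2 _ _ hl
        obtain ⟨N, hN, hc'⟩ := ih1.2 _ _ hr
        exact ⟨.par N M, Step.comR hM hN, .par hc' hc⟩
      | parL _ hl =>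
        obtain ⟨M, hM, hc⟩ := ih1.2 _ _ hl
        exact ⟨.par M Q, Step.parL _ hM, .par hc h2⟩
      | parR _ hr =>
        obtain ⟨N, hN, hc⟩ := ih2.2 _ _ hr
        exact ⟨.par P N, Step.parR _ hN, .par h1 hc⟩
  | @bang P Q h ih =>
    refine ⟨fun α x hs => ?_, fun α x hs => ?_⟩
    · cases hs with
      | bang hl =>
        obtain ⟨M, hM, hc⟩ := ih.1 _ _ hl
        exact ⟨.par M (.bang Q), Step.bang hM, .par hc (.bang h)⟩
      | bangCom h1 h2 =>
        obtain ⟨M, hM, hc⟩ := ih.1 _ _ h1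
        obtain ⟨N, hN, hc'⟩ := ih.1 _ _ h2
        exact ⟨.par M (.par N (.bang Q)), Step.bangCom hM hN, .par hc (.par hc' (.bang h))⟩
    · cases hs with
      | bang hl =>
        obtain ⟨M, hM, hc⟩ := ih.2 _ _ hl
        exact ⟨.par M (.bang P), Step.bang hM, .par hc (.bang h)⟩
      | bangCom h1 h2 =>
        obtain ⟨M, hM, hc⟩ := ih.2 _ _ h1
        obtain ⟨N, hN, hc'⟩ := ih.2 _ _ h2
        exact ⟨.par M (.par N (.bang P)), Step.bangCom hM hN, .par hc (.par hc' (.bang h))⟩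
  | parNil P =>
    refine ⟨fun α x hs => ?_, fun α x hs => ?_⟩
    · cases hs with
      | comL hl hr => cases hr
      | comR hl hr => cases hl
      | parL _ hl => exact ⟨_, hl, .parNil _⟩
      | parR _ hr => cases hr
    · exact ⟨.par x .nil, Step.parL _ hs, .parNil _⟩
  | parComm P Q =>
    refine ⟨fun α x hs => ?_, fun α x hs => ?_⟩
    · cases hs with
      | comL hl hr => exact ⟨_, Step.comR hl hr, .parComm _ _⟩
      | comR hl hr => exact ⟨_, Step.comL hl hr, .parComm _ _⟩
      | parL _ hl => exact ⟨_, Step.parR _ hl, .parComm _ _⟩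
      | parR _ hr => exact ⟨_, Step.parL _ hr, .parComm _ _⟩
    · cases hs with
      | comL hl hr => exact ⟨_, Step.comR hl hr, .parComm _ _⟩
      | comR hl hr => exact ⟨_, Step.comL hl hr, .parComm _ _⟩
      | parL _ hl => exact ⟨_, Step.parR _ hl, .parComm _ _⟩
      | parR _ hr => exact ⟨_, Step.parL _ hr, .parComm _ _⟩
  | parAssoc P Q R =>
    refine ⟨fun α x hs => ?_, fun α x hs => ?_⟩
    · cases hs with
      | comL hl hr =>
        -- P out, (Q|R) in
        cases hr with
        | parL _ h2 => exact ⟨_, Step.parL _ (Step.comL hl h2), .parAssoc _ _ _⟩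
        | parR _ h2 => exact ⟨_, Step.comL (Step.parL _ hl) h2, .parAssoc _ _ _⟩
      | comR hl hr =>
        -- (Q|R) out, P in
        cases hl with
        | parL _ h2 => exact ⟨_, Step.parL _ (Step.comR h2 hr), .parAssoc _ _ _⟩
        | parR _ h2 => exact ⟨_, Step.comR h2 (Step.parL _ hr), .parAssoc _ _ _⟩
      | parL _ hl => exact ⟨_, Step.parL _ (Step.parL _ hl), .parAssoc _ _ _⟩
      | parR _ hr =>
        cases hr with
        | comL h1 h2 => exact ⟨_, Step.comL (Step.parR _ h1) h2, .parAssoc _ _ _⟩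
        | comR h1 h2 => exact ⟨_, Step.comR h1 (Step.parR _ h2), .parAssoc _ _ _⟩
        | parL _ h1 => exact ⟨_, Step.parL _ (Step.parR _ h1), .parAssoc _ _ _⟩
        | parR _ h1 => exact ⟨_, Step.parR _ h1, .parAssoc _ _ _⟩
    · cases hs with
      | comL hl hr =>
        -- (P|Q) out, R in
        cases hl with
        | parL _ h2 => exact ⟨_, Step.comL h2 (Step.parR _ hr), .parAssoc _ _ _⟩
        | parR _ h2 => exact ⟨_, Step.parR _ (Step.comL h2 hr), .parAssoc _ _ _⟩
      | comR hl hr =>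
        -- R out, (P|Q) in
        cases hr with
        | parL _ h2 => exact ⟨_, Step.comR (Step.parR _ hl) h2, .parAssoc _ _ _⟩
        | parR _ h2 => exact ⟨_, Step.parR _ (Step.comR hl h2), .parAssoc _ _ _⟩
      | parL _ hl =>
        cases hl with
        | comL h1 h2 => exact ⟨_, Step.comL h1 (Step.parL _ h2), .parAssoc _ _ _⟩
        | comR h1 h2 => exact ⟨_, Step.comR (Step.parL _ h1) h2, .parAssoc _ _ _⟩
        | parL _ h1 => exact ⟨_, Step.parL _ h1, .parAssoc _ _ _⟩
        | parR _ h1 => exact ⟨_, Step.parR _ (Step.parL _ h1), .parAssoc _ _ _⟩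
      | parR _ hr => exact ⟨_, Step.parR _ (Step.parR _ hr), .parAssoc _ _ _⟩
  | bangUnf P =>
    refine ⟨fun α x hs => ?_, fun α x hs => ?_⟩
    · cases hs with
      | bang hl => exact ⟨_, Step.parL _ hl, .refl _⟩
      | bangCom h1 h2 =>
        exact ⟨_, Step.comL h2 (Step.bang h1), scb_swap3 _ _ _⟩
    · cases hs with
      | comL hl hr =>
        -- P out, !P in
        cases hr with
        | bang h2 => exact ⟨_, Step.bangCom h2 hl, scb_swap3 _ _ _⟩
      | comR hl hr =>
        -- !P out, P in
        cases hl with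
        | bang h2 => exact ⟨_, Step.bangCom hr h2, .refl _⟩
      | parL _ hl =>
        exact ⟨_, Step.bang hl, .refl _⟩
      | parR _ hr =>
        cases hr with
        | bang h2 =>
          exact ⟨.par _ (.bang P), Step.bang h2,
            .trans (.par (.refl _) (.bangUnf P)) (scb_swap3 _ _ _)⟩
        | bangCom h1 h2 =>
          exact ⟨_, Step.bangCom h1 h2,
            .trans (.par (.refl _)
              (.trans (.par (.refl _) (.bangUnf P)) (scb_swap3 _ _ _)))
              (scb_swap3 _ _ _)⟩

lemma scb_step {P Q} (h : SCB P Q) {α P'} (hs : Step P α P') :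
    ∃ Q', Step Q α Q' ∧ SCB P' Q' :=
  (scb_step_both h).1 α P' hs

lemma scb_sim : ∀ u v u', SCB u v → TauStep u u' → ∃ v', TauStep v v' ∧ SCB u' v' :=
  fun _ _ _ h hs => scb_step h hs

lemma scb_acc {u v} (h : SCB u v) (hv : Acc rt v) : Acc rt u :=
  acc_sim scb_sim hv u h

lemma scb_div {u v} (h : SCB u v) (hd : Divergent u) : Divergent v :=
  div_sim scb_sim h hd

lemma scb_taus {u v u'} (h : SCB u v) (ht : Taus u u') : ∃ v', Taus v v' ∧ SCB u' v' := by
  induction ht with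
  | refl => exact ⟨v, .refl, h⟩
  | tail _ hstep ih =>
    obtain ⟨w, hw, hc⟩ := ih
    obtain ⟨w', hw', hc'⟩ := scb_step hc hstep
    exact ⟨w', hw.tail hw', hc'⟩

lemma scb_tg {u v u'} (h : SCB u v) (ht : Relation.TransGen TauStep u u') :
    ∃ v', Relation.TransGen TauStep v v' ∧ SCB u' v' := by
  induction ht with
  | single hstep =>
    obtain ⟨w, hw, hc⟩ := scb_step h hstep
    exact ⟨w, .single hw, hc⟩
  | tail _ hstep ih =>
    obtain ⟨w, hw, hc⟩ := ih
    obtain ⟨w', hw', hc'⟩ := scb_step hc hstep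
    exact ⟨w', hw.tail hw', hc'⟩

lemma scb_wk {u v u' α} (h : SCB u v) (hw : WeakStep u α u') :
    ∃ v', WeakStep v α v' ∧ SCB u' v' := by
  obtain ⟨p1, p2, h1, h2, h3⟩ := hw
  obtain ⟨q1, hq1, hc1⟩ := scb_taus h h1
  obtain ⟨q2, hq2, hc2⟩ := scb_step hc1 h2
  obtain ⟨q3, hq3, hc3⟩ := scb_taus hc2 h3
  exact ⟨q3, ⟨q1, q2, hq1, hq2, hq3⟩, hc3⟩

/-! ### Ordinal rank of non-divergent processes -/

open Classical in
noncomputable def nrank (p : Proc) : Ordinal :=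
  if h : Acc rt p then h.rank else 0

lemma nrank_lt_of_step {p p'} (hacc : Acc rt p) (h : TauStep p p') : nrank p' < nrank p := by
  have h2 : Acc rt p' := hacc.inv h
  rw [nrank, nrank, dif_pos hacc, dif_pos h2]
  exact Acc.rank_lt_of_rel hacc (show rt p' p from h)

lemma rank_le_of_sim {T : Proc → Proc → Prop}
    (hT : ∀ u v u', T u v → TauStep u u' → ∃ v', TauStep v v' ∧ T u' v') :
    ∀ {v} (hv : Acc rt v) {u} (hu : Acc rt u), T u v → hu.rank ≤ hv.rank := by
  intro v hv
  induction hv with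
  | intro v hv ih =>
    intro u hu hTuv
    rw [hu.rank_eq]
    apply Ordinal.iSup_le
    rintro ⟨u', hu'⟩
    obtain ⟨v', hs, hT'⟩ := hT u v u' hTuv hu'
    have h1 : (hu.inv hu').rank ≤ (hv v' hs).rank := ih v' hs (hu.inv hu') hT'
    have h2 : (hv v' hs).rank < (Acc.intro v hv).rank :=
      Acc.rank_lt_of_rel (Acc.intro v hv) (show rt v' v from hs)
    exact Order.succ_le_of_lt (lt_of_le_of_lt h1 h2)

lemma nrank_le_of_sim {T : Proc → Proc → Prop}
    (hT : ∀ u v u', T u v → TauStep u u' → ∃ v', TauStep v v' ∧ T u' v')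
    {u v} (hv : Acc rt v) (hTuv : T u v) : nrank u ≤ nrank v := by
  have hu : Acc rt u := acc_sim hT hv u hTuv
  rw [nrank, nrank, dif_pos hu, dif_pos hv]
  exact rank_le_of_sim hT hv hu hTuv

lemma scb_nrank_eq {u v} (h : SCB u v) (hv : Acc rt v) : nrank u = nrank v :=
  le_antisymm (nrank_le_of_sim scb_sim hv h)
    (nrank_le_of_sim scb_sim (scb_acc h hv) (SCB.symm h))

/-! ### Flat contexts -/

def flatB : Ctx → Bool
  | .hole => true
  | .parL C _ => flatB C
  | .parR _ C => flatB C
  | _ => false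

lemma flat_fill_step : ∀ {C : Ctx}, flatB C = true → ∀ {z z'}, TauStep z z' →
    TauStep (C.fill z) (C.fill z') := by
  intro C
  induction C with
  | hole => intro _ z z' h; exact h
  | parL C w ih => intro hf z z' h; exact Step.parL w (ih hf h)
  | parR w C ih => intro hf z z' h; exact Step.parR w (ih hf h)
  | inp a C ih => intro hf; simp [flatB] at hf
  | out a C ih => intro hf; simp [flatB] at hf
  | bang C ih => intro hf; simp [flatB] at hf

lemma nrank_le_fill {C : Ctx} (hf : flatB C = true) {z} (hacc : Acc rt (C.fill z)) :
    nrank z ≤ nrank (C.fill z) :=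
  nrank_le_of_sim (T := fun a b => b = C.fill a)
    (fun a _ a' hb hs => ⟨C.fill a', hb ▸ flat_fill_step hf hs, rfl⟩) hacc rfl

/-! ### Congruence closure of a relation, as data -/

noncomputable def nadd : Ordinal.{0} → Ordinal.{0} → Ordinal.{0}
  | a, b => max (⨆ x : Set.Iio a, Order.succ (nadd x.1 b)) (⨆ y : Set.Iio b, Order.succ (nadd a y.1))
termination_by a b => (a, b)
decreasing_by
  · exact Prod.Lex.left _ _ x.2
  · exact Prod.Lex.right _ y.2

infixl:65 " ♯ " => nadd

theorem nadd_lt_nadd_right {a' a : Ordinal.{0}} (h : a' < a) (b : Ordinal.{0}) : a' ♯ b < a ♯ b := by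
  rw [nadd.eq_1 a b]
  refine lt_of_lt_of_le (Order.lt_succ _) (le_max_of_le_left ?_)
  exact le_ciSup (f := fun x : Set.Iio a => Order.succ (nadd x.1 b)) Ordinal.bddAbove_of_small ⟨a', h⟩

theorem nadd_lt_nadd_left {b' b : Ordinal.{0}} (h : b' < b) (a : Ordinal.{0}) : a ♯ b' < a ♯ b := by
  rw [nadd.eq_1 a b]
  refine lt_of_lt_of_le (Order.lt_succ _) (le_max_of_le_right ?_)
  exact le_ciSup (f := fun y : Set.Iio b => Order.succ (nadd a y.1)) Ordinal.bddAbove_of_small ⟨b', h⟩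

@[simp]
theorem nadd_zero (a : Ordinal.{0}) : a ♯ 0 = a := by
  induction a using Ordinal.induction with
  | h a ih =>
    apply le_antisymm
    · rw [nadd.eq_1 a 0]
      apply max_le
      · exact Ordinal.iSup_le fun x => by rw [ih x.1 x.2]; exact Order.succ_le_of_lt x.2
      · exact Ordinal.iSup_le fun y => (not_lt_of_ge zero_le (show (y : Ordinal) < 0 from y.2)).elim
    · refine le_of_forall_lt fun c hc => ?_
      rw [← ih c hc]; exact nadd_lt_nadd_right hc 0

@[simp]
theorem zero_nadd (b : Ordinal.{0}) : 0 ♯ b = b := by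
  induction b using Ordinal.induction with
  | h b ih =>
    apply le_antisymm
    · rw [nadd.eq_1 0 b]
      apply max_le
      · exact Ordinal.iSup_le fun x => (not_lt_of_ge zero_le (show (x : Ordinal) < 0 from x.2)).elim
      · exact Ordinal.iSup_le fun y => by rw [ih y.1 y.2]; exact Order.succ_le_of_lt y.2
    · refine le_of_forall_lt fun c hc => ?_
      rw [← ih c hc]; exact nadd_lt_nadd_left hc 0

section Closure


variable {R : Proc → Proc → Prop}

/-- Derivations of the congruence closure of `R`. -/
inductive CgT (R : Proc → Proc → Prop) : Proc → Proc → Type where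
  | base {p q} : R p q → CgT R p q
  | refl (p) : CgT R p p
  | inp (a : ℕ) {p q} : CgT R p q → CgT R (.inp a p) (.inp a q)
  | out (a : ℕ) {p q} : CgT R p q → CgT R (.out a p) (.out a q)
  | par {p q u v} : CgT R p q → CgT R u v → CgT R (.par p u) (.par q v)
  | bang {p q} : CgT R p q → CgT R (.bang p) (.bang q)

/-- The candidate weak bisimulation: congruence closure sandwiched in `SCB`. -/
def SRel (R : Proc → Proc → Prop) (x y : Proc) : Prop :=
  ∃ u v, SCB x u ∧ Nonempty (CgT R u v) ∧ SCB v y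

/-- Measure of a derivation: ranks of the left sides of unguarded, unreplicated
`R`-leaves, combined by natural ordinal addition. -/
noncomputable def mCg : ∀ {x y}, CgT R x y → Ordinal
  | _, _, .base (p := p) _ => Order.succ (nrank p)
  | _, _, .refl _ => 0
  | _, _, .inp _ _ => 0
  | _, _, .out _ _ => 0
  | _, _, .par d₁ d₂ => mCg d₁ ♯ mCg d₂
  | _, _, .bang _ => 0

/-- Filling a context with a derivation. -/
def fillD : ∀ (C : Ctx) {u v}, CgT R u v → CgT R (C.fill u) (C.fill v)
  | .hole, _, _, d => d
  | .inp a C, _, _, d => .inp a (fillD C d)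
  | .out a C, _, _, d => .out a (fillD C d)
  | .parL C w, _, _, d => .par (fillD C d) (.refl w)
  | .parR w C, _, _, d => .par (.refl w) (fillD C d)
  | .bang C, _, _, d => .bang (fillD C d)

lemma mCg_fillD : ∀ (C : Ctx) {u v} (d : CgT R u v),
    mCg (fillD C d) = if flatB C then mCg d else 0 := by
  intro C
  induction C with
  | hole => intro u v d; simp [fillD, flatB]; rfl
  | parL C w ih => intro u v d; simp [fillD, flatB, mCg, ih d]; rfl
  | parR w C ih => intro u v d; simp [fillD, flatB, mCg, ih d]; rfl
  | inp a C ih => intro u v d; simp [fillD, flatB, mCg]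
  | out a C ih => intro u v d; simp [fillD, flatB, mCg]
  | bang C ih => intro u v d; simp [fillD, flatB, mCg]

def cgt_symm (hsym : Symmetric R) : ∀ {x y}, CgT R x y → CgT R y x
  | _, _, .base h => .base (hsym h)
  | _, _, .refl p => .refl p
  | _, _, .inp a d => .inp a (cgt_symm hsym d)
  | _, _, .out a d => .out a (cgt_symm hsym d)
  | _, _, .par d₁ d₂ => .par (cgt_symm hsym d₁) (cgt_symm hsym d₂)
  | _, _, .bang d => .bang (cgt_symm hsym d)

lemma srel_of_cgt {x y} (d : CgT R x y) : SRel R x y := ⟨x, y, .refl x, ⟨d⟩, .refl y⟩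

lemma srel_par {a b c d} (h1 : SRel R a b) (h2 : SRel R c d) :
    SRel R (.par a c) (.par b d) := by
  obtain ⟨u1, v1, hx1, ⟨d1⟩, hy1⟩ := h1
  obtain ⟨u2, v2, hx2, ⟨d2⟩, hy2⟩ := h2
  exact ⟨.par u1 u2, .par v1 v2, .par hx1 hx2, ⟨.par d1 d2⟩, .par hy1 hy2⟩

lemma srel_scb_left {a a' b} (h : SCB a a') (hs : SRel R a' b) : SRel R a b := by
  obtain ⟨u, v, hx, hd, hy⟩ := hs
  exact ⟨u, v, .trans h hx, hd, hy⟩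

lemma srel_scb_right {a b' b} (hs : SRel R a b') (h : SCB b' b) : SRel R a b := by
  obtain ⟨u, v, hx, hd, hy⟩ := hs
  exact ⟨u, v, hx, hd, .trans hy h⟩

lemma srel_symm (hsym : Symmetric R) {x y} (h : SRel R x y) : SRel R y x := by
  obtain ⟨u, v, hx, ⟨d⟩, hy⟩ := h
  exact ⟨v, u, .symm hy, ⟨cgt_symm hsym d⟩, .symm hx⟩

/-! ### Visible actions lemmas -/

lemma inp_ne_tau {a : ℕ} : (Act.inp a) ≠ Act.tau := by intro h; cases h
lemma out_ne_tau {a : ℕ} : (Act.out a) ≠ Act.tau := by intro h; cases h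

lemma weakhat_of_ne {P Q α} (h : α ≠ Act.tau) : WeakHat P α Q ↔ WeakStep P α Q := by
  cases α with
  | inp a => exact Iff.rfl
  | out a => exact Iff.rfl
  | tau => exact absurd rfl h

/-- A τ-step always exhibits a pair of complementary visible transitions. -/
lemma comv : ∀ {p α p'}, Step p α p' → α = .tau →
    ∃ a u v, Step p (.inp a) u ∧ Step p (.out a) v := by
  intro p α p' h
  induction h with
  | inp a P => intro h; cases h
  | out a P => intro h; cases h
  | @comL a P P' Q Q' hP hQ =>
    intro _
    exact ⟨a, _, _, Step.parR _ hQ, Step.parL _ hP⟩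
  | @comR a P P' Q Q' hP hQ =>
    intro _
    exact ⟨a, _, _, Step.parL _ hQ, Step.parR _ hP⟩
  | parL Q _ ih =>
    intro he
    obtain ⟨a, u, v, h1, h2⟩ := ih he
    exact ⟨a, _, _, Step.parL _ h1, Step.parL _ h2⟩
  | parR Q _ ih =>
    intro he
    obtain ⟨a, u, v, h1, h2⟩ := ih he
    exact ⟨a, _, _, Step.parR _ h1, Step.parR _ h2⟩
  | bang _ ih =>
    intro he
    obtain ⟨a, u, v, h1, h2⟩ := ih he
    exact ⟨a, _, _, Step.bang h1, Step.bang h2⟩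
  | bangCom h1 h2 =>
    intro _
    exact ⟨_, _, _, Step.bang h1, Step.bang h2⟩

/-! ### Replication helpers -/

lemma taus_bang_opt {q q₁} (h : Taus q q₁) :
    q₁ = q ∨ Relation.TransGen TauStep (.bang q) (.par q₁ (.bang q)) := by
  rcases Relation.reflTransGen_iff_eq_or_transGen.mp h with heq | htg
  · exact Or.inl heq
  · obtain ⟨t, h1, h2⟩ := Relation.TransGen.head'_iff.mp htg
    exact Or.inr (Relation.TransGen.head' (Step.bang h1) (taus_parL _ h2))

lemma wk_bang {q α w} (h : WeakStep q α w) : WeakStep (.bang q) α (.par w (.bang q)) := by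
  obtain ⟨q₁, q₂, h1, h2, h3⟩ := h
  rcases taus_bang_opt h1 with heq | htg
  · exact ⟨.bang q, .par q₂ (.bang q), .refl, Step.bang (heq ▸ h2), taus_parL _ h3⟩
  · exact ⟨.par q₁ (.bang q), .par q₂ (.bang q), htg.to_reflTransGen,
      Step.parL _ h2, taus_parL _ h3⟩

/-- Two complementary weak visible actions of `q` generate a nonempty τ-sequence of `!q`. -/
lemma tg_bang_com {q a u v} (hu : WeakStep q (.inp a) u) (hv : WeakStep q (.out a) v) :
    ∃ A B, Relation.TransGen TauStep (.bang q) (.par A (.par B (.bang q))) ∧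
      SCB (.par A (.par B (.bang q))) (.par u (.par v (.bang q))) := by
  obtain ⟨q₁, q₂, hu1, hu2, hu3⟩ := hu
  obtain ⟨v₁, v₂, hv1, hv2, hv3⟩ := hv
  have trail : ∀ X, Taus (.par q₂ (.par v₂ X)) (.par u (.par v X)) := fun X =>
    (taus_parL _ hu3).trans (taus_parR u (taus_parL X hv3))
  rcases taus_bang_opt hu1 with hequ | htgu
  · rcases taus_bang_opt hv1 with heqv | htgv
    · refine ⟨u, v, ?_, .refl _⟩
      exact Relation.TransGen.head' (Step.bangCom (hequ ▸ hu2) (heqv ▸ hv2)) (trail _)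
    · -- u-side leading taus empty, v-side nonempty
      refine ⟨v, u, ?_, scb_swap3 _ _ _⟩
      have com : TauStep (.par v₁ (.bang q)) (.par v₂ (.par q₂ (.bang q))) :=
        Step.comL hv2 (Step.bang (hequ ▸ hu2))
      have trail2 : Taus (.par v₂ (.par q₂ (.bang q))) (.par v (.par u (.bang q))) :=
        (taus_parL _ hv3).trans (taus_parR v (taus_parL _ hu3))
      exact htgv.trans (Relation.TransGen.head' com trail2)
  · rcases taus_bang_opt hv1 with heqv | htgv
    · refine ⟨u, v, ?_, .refl _⟩
      have com : TauStep (.par q₁ (.bang q)) (.par q₂ (.par v₂ (.bang q))) :=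
        Step.comR (Step.bang (heqv ▸ hv2)) hu2
      exact htgu.trans (Relation.TransGen.head' com (trail _))
    · refine ⟨u, v, ?_, .refl _⟩
      have mid : Relation.TransGen TauStep (.par q₁ (.bang q))
          (.par q₁ (.par v₁ (.bang q))) := tg_parR q₁ htgv
      have com : TauStep (.par q₁ (.par v₁ (.bang q))) (.par q₂ (.par v₂ (.bang q))) :=
        Step.comR (Step.parL _ hv2) hu2
      exact (htgu.trans mid).trans (Relation.TransGen.head' com (trail _))

/-- Occurrence of `!q` along a right-nested parallel spine. -/
inductive HasB (q : Proc) : Proc → Prop where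
  | base : HasB q (.bang q)
  | par (w) {z} : HasB q z → HasB q (.par w z)

lemma bang_div {q a u v} (hu : WeakStep q (.inp a) u) (hv : WeakStep q (.out a) v) :
    Divergent (.bang q) := by
  refine div_pump (X := HasB q) ?_ _ HasB.base
  intro z hz
  induction hz with
  | base =>
    obtain ⟨A, B, htg, _⟩ := tg_bang_com hu hv
    exact ⟨_, htg, .par _ (.par _ .base)⟩
  | par w _ ih =>
    obtain ⟨z', htg, h'⟩ := ih
    exact ⟨.par w z', tg_parR w htg, .par w h'⟩

end Closure

section Transfer


variable {R : Proc → Proc → Prop} (hR : IsWeakBisimUptoCtx R)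

include hR

/-- Visible transfer: a visible action of the left side of a derivation is
matched by a weak visible action. -/
lemma vis : ∀ {x y}, CgT R x y → ∀ {α x'}, Step x α x' → α ≠ .tau →
    ∃ y', WeakStep y α y' ∧ SRel R x' y' := by
  intro x y d
  induction d with
  | @base p q hpq =>
    intro α x' hs hne
    obtain ⟨q', hwh, C, P₁, Q₁, h1, h2, h3⟩ := hR.2.2 _ _ hpq α x' hs
    rw [weakhat_of_ne hne] at hwh
    exact ⟨q', hwh, ⟨C.fill P₁, C.fill Q₁, sc_scb h1, ⟨fillD C (.base h3)⟩,
      .symm (sc_scb h2)⟩⟩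
  | refl p =>
    intro α x' hs _
    exact ⟨x', ⟨p, x', .refl, hs, .refl⟩, srel_of_cgt (.refl x')⟩
  | @inp a p q d _ =>
    intro α x' hs _
    cases hs
    exact ⟨q, ⟨.inp a q, q, .refl, Step.inp a q, .refl⟩, srel_of_cgt d⟩
  | @out a p q d _ =>
    intro α x' hs _
    cases hs
    exact ⟨q, ⟨.out a q, q, .refl, Step.out a q, .refl⟩, srel_of_cgt d⟩
  | @par p q u v d₁ d₂ ih₁ ih₂ =>
    intro α x' hs hne
    cases hs with
    | comL h1 h2 => exact absurd rfl hne
    | comR h1 h2 => exact absurd rfl hne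
    | parL _ hl =>
      obtain ⟨w, hw, hsr⟩ := ih₁ hl hne
      exact ⟨.par w v, wk_parL _ hw, srel_par hsr (srel_of_cgt d₂)⟩
    | parR _ hr =>
      obtain ⟨w, hw, hsr⟩ := ih₂ hr hne
      exact ⟨.par q w, wk_parR _ hw, srel_par (srel_of_cgt d₁) hsr⟩
  | @bang p q d ih =>
    intro α x' hs hne
    cases hs with
    | bang hl =>
      obtain ⟨w, hw, hsr⟩ := ih hl hne
      exact ⟨.par w (.bang q), wk_bang hw, srel_par hsr (srel_of_cgt (.bang d))⟩
    | bangCom h1 h2 => exact absurd rfl hne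

/-- τ-transfer: a τ-action of the left side is matched by a (possibly empty)
τ-sequence. -/
lemma tauT : ∀ {x y}, CgT R x y → ∀ {x'}, Step x .tau x' →
    ∃ y', Taus y y' ∧ SRel R x' y' := by
  intro x y d
  induction d with
  | @base p q hpq =>
    intro x' hs
    obtain ⟨q', hwh, C, P₁, Q₁, h1, h2, h3⟩ := hR.2.2 _ _ hpq .tau x' hs
    exact ⟨q', hwh, ⟨C.fill P₁, C.fill Q₁, sc_scb h1, ⟨fillD C (.base h3)⟩,
      .symm (sc_scb h2)⟩⟩
  | refl p =>
    intro x' hs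
    exact ⟨x', .single hs, srel_of_cgt (.refl x')⟩
  | inp a d _ => intro x' hs; cases hs
  | out a d _ => intro x' hs; cases hs
  | @par p q u v d₁ d₂ ih₁ ih₂ =>
    intro x' hs
    cases hs with
    | parL _ hl =>
      obtain ⟨w, hw, hsr⟩ := ih₁ hl
      exact ⟨.par w v, taus_parL _ hw, srel_par hsr (srel_of_cgt d₂)⟩
    | parR _ hr =>
      obtain ⟨w, hw, hsr⟩ := ih₂ hr
      exact ⟨.par q w, taus_parR _ hw, srel_par (srel_of_cgt d₁) hsr⟩
    | comL h1 h2 =>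
      obtain ⟨w₁, hw₁, hsr₁⟩ := vis hR d₁ h1 out_ne_tau
      obtain ⟨w₂, hw₂, hsr₂⟩ := vis hR d₂ h2 inp_ne_tau
      exact ⟨.par w₁ w₂, (tg_com_out_in hw₁ hw₂).to_reflTransGen, srel_par hsr₁ hsr₂⟩
    | comR h1 h2 =>
      obtain ⟨w₁, hw₁, hsr₁⟩ := vis hR d₁ h2 inp_ne_tau
      obtain ⟨w₂, hw₂, hsr₂⟩ := vis hR d₂ h1 out_ne_tau
      exact ⟨.par w₁ w₂, (tg_com_in_out hw₁ hw₂).to_reflTransGen, srel_par hsr₁ hsr₂⟩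
  | @bang p q d ih =>
    intro x' hs
    cases hs with
    | bang hl =>
      obtain ⟨w, hw, hsr⟩ := ih hl
      rcases taus_bang_opt hw with heq | htg
      · obtain ⟨u1, v1, hx1, ⟨d1⟩, hy1⟩ := hsr
        refine ⟨.bang q, .refl, ⟨.par u1 (.bang p), .par v1 (.bang q),
          .par hx1 (.refl _), ⟨.par d1 (.bang d)⟩, ?_⟩⟩
        exact .trans (.par (.trans hy1 (by rw [heq]; exact .refl _)) (.refl _)) (.symm (.bangUnf q))
      · exact ⟨.par w (.bang q), htg.to_reflTransGen,
          srel_par hsr (srel_of_cgt (.bang d))⟩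
    | bangCom h1 h2 =>
      obtain ⟨w₁, hw₁, hsr₁⟩ := vis hR d h1 inp_ne_tau
      obtain ⟨w₂, hw₂, hsr₂⟩ := vis hR d h2 out_ne_tau
      obtain ⟨A, B, htg, hscb⟩ := tg_bang_com hw₁ hw₂
      exact ⟨.par A (.par B (.bang q)), htg.to_reflTransGen,
        srel_scb_right (srel_par hsr₁ (srel_par hsr₂ (srel_of_cgt (.bang d))))
          (.symm hscb)⟩

/-- Refined τ-transfer: either the match is nonempty, or the right side is
divergent, or the measure strictly decreases with the right side unchanged. -/
lemma ref : ∀ {x y} (d : CgT R x y) {x'}, Step x .tau x' → ¬ Divergent y →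
    (∃ y', Relation.TransGen TauStep y y' ∧ SRel R x' y') ∨
    Divergent y ∨
    (∃ u v, SCB x' u ∧ SCB v y ∧ ∃ d' : CgT R u v, mCg d' < mCg d) := by
  intro x y d
  induction d with
  | @base p q hpq =>
    intro x' hs hnd
    obtain ⟨q', hwh, C, P₁, Q₁, h1, h2, h3⟩ := hR.2.2 _ _ hpq .tau x' hs
    rcases Relation.reflTransGen_iff_eq_or_transGen.mp (hwh : Taus q q') with heq | htg
    · -- empty match
      right; right
      refine ⟨C.fill P₁, C.fill Q₁, sc_scb h1, .trans (.symm (sc_scb h2)) (by rw [heq]; exact .refl _),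
        fillD C (.base h3), ?_⟩
      rw [mCg_fillD]
      have haccq : Acc rt q := acc_of_not_div hnd
      have haccp : Acc rt p := by
        by_contra hcon
        exact hnd ((hR.2.1 _ _ hpq).mp (div_of_not_acc hcon))
      by_cases hf : flatB C
      · rw [if_pos hf]
        have haccx' : Acc rt x' := haccp.inv hs
        have haccC : Acc rt (C.fill P₁) := scb_acc (.symm (sc_scb h1)) haccx'
        have hle : nrank P₁ ≤ nrank (C.fill P₁) := nrank_le_fill hf haccC
        have heq2 : nrank (C.fill P₁) = nrank x' :=
          (scb_nrank_eq (sc_scb h1) haccC).symm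
        have hlt : nrank x' < nrank p := nrank_lt_of_step haccp hs
        show Order.succ (nrank P₁) < Order.succ (nrank p)
        exact Order.succ_lt_succ (lt_of_le_of_lt (heq2 ▸ hle) hlt)
      · rw [if_neg hf]
        exact lt_of_le_of_lt zero_le (Order.lt_succ _)
    · -- nonempty match
      left
      exact ⟨q', htg, ⟨C.fill P₁, C.fill Q₁, sc_scb h1, ⟨fillD C (.base h3)⟩,
        .symm (sc_scb h2)⟩⟩
  | refl p =>
    intro x' hs _
    exact Or.inl ⟨x', .single hs, srel_of_cgt (.refl x')⟩
  | inp a d _ => intro x' hs _; cases hs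
  | out a d _ => intro x' hs _; cases hs
  | @par p q u v d₁ d₂ ih₁ ih₂ =>
    intro x' hs hnd
    cases hs with
    | parL _ hl =>
      have hnd₁ : ¬ Divergent q := fun hd => hnd (div_parL_lift _ hd)
      rcases ih₁ hl hnd₁ with ⟨y', htg, hsr⟩ | hdy | ⟨u', v', hx', hy', d', hm⟩
      · exact Or.inl ⟨.par y' v, tg_parL v htg, srel_par hsr (srel_of_cgt d₂)⟩
      · exact Or.inr (Or.inl (div_parL_lift _ hdy))
      · exact Or.inr (Or.inr ⟨.par u' u, .par v' v, .par hx' (.refl _),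
          .par hy' (.refl _), .par d' d₂, nadd_lt_nadd_right hm _⟩)
    | parR _ hr =>
      have hnd₂ : ¬ Divergent v := fun hd => hnd (div_parR_lift _ hd)
      rcases ih₂ hr hnd₂ with ⟨y', htg, hsr⟩ | hdy | ⟨u', v', hx', hy', d', hm⟩
      · exact Or.inl ⟨.par q y', tg_parR q htg, srel_par (srel_of_cgt d₁) hsr⟩
      · exact Or.inr (Or.inl (div_parR_lift _ hdy))
      · exact Or.inr (Or.inr ⟨.par p u', .par q v', .par (.refl _) hx',
          .par (.refl _) hy', .par d₁ d', nadd_lt_nadd_left hm _⟩)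
    | comL h1 h2 =>
      obtain ⟨w₁, hw₁, hsr₁⟩ := vis hR d₁ h1 out_ne_tau
      obtain ⟨w₂, hw₂, hsr₂⟩ := vis hR d₂ h2 inp_ne_tau
      exact Or.inl ⟨.par w₁ w₂, tg_com_out_in hw₁ hw₂, srel_par hsr₁ hsr₂⟩
    | comR h1 h2 =>
      obtain ⟨w₁, hw₁, hsr₁⟩ := vis hR d₁ h2 inp_ne_tau
      obtain ⟨w₂, hw₂, hsr₂⟩ := vis hR d₂ h1 out_ne_tau
      exact Or.inl ⟨.par w₁ w₂, tg_com_in_out hw₁ hw₂, srel_par hsr₁ hsr₂⟩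
  | @bang p q d _ =>
    intro x' hs _
    cases hs with
    | bang hl =>
      obtain ⟨a, u0, v0, hiu, hiv⟩ := comv hl rfl
      obtain ⟨w₁, hw₁, _⟩ := vis hR d hiu inp_ne_tau
      obtain ⟨w₂, hw₂, _⟩ := vis hR d hiv out_ne_tau
      exact Or.inr (Or.inl (bang_div hw₁ hw₂))
    | bangCom h1 h2 =>
      obtain ⟨w₁, hw₁, _⟩ := vis hR d h1 inp_ne_tau
      obtain ⟨w₂, hw₂, _⟩ := vis hR d h2 out_ne_tau
      exact Or.inr (Or.inl (bang_div hw₁ hw₂))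

end Transfer

section MainProof

variable {R : Proc → Proc → Prop} (hR : IsWeakBisimUptoCtx R)

include hR

/-- Key divergence transfer: by well-founded induction on the (non-divergent)
right-hand side, with an inner ordinal induction on the measure. -/
lemma srel_div_key : ∀ y, Acc rtg y → ¬ Divergent y →
    ∀ x, SRel R x y → Divergent x → False := by
  intro y hacc
  induction hacc with
  | intro y _ ihy =>
    intro hnd x hsx hdx
    obtain ⟨u, v, hx, ⟨d⟩, hy⟩ := hsx
    have inner : ∀ (o : Ordinal), ∀ x u v, SCB x u → ∀ d : CgT R u v, SCB v y →
        mCg d = o → Divergent x → False := by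
      intro o
      induction o using Ordinal.induction with
      | h o iho =>
        intro x u v hx d hy hmo hdx
        have hdu : Divergent u := scb_div hx hdx
        obtain ⟨x₁, hstep, hdx₁⟩ := div_head hdu
        have hndv : ¬ Divergent v := fun hd => hnd (scb_div hy hd)
        rcases ref hR d hstep hndv with ⟨y₁, htg, hsr⟩ | hdy | ⟨u₁, v₁, hx₁, hy₁, d₁, hm⟩
        · obtain ⟨y₁', htg', hscb₁⟩ := scb_tg hy htg
          have hnd₁ : ¬ Divergent y₁' := not_div_taus hnd htg'.to_reflTransGen
          exact ihy y₁' htg' hnd₁ x₁ (srel_scb_right hsr hscb₁) hdx₁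
        · exact hndv hdy
        · obtain ⟨u₂, v₂, hx₂, hd₂, hy₂⟩ := srel_scb_right (srel_scb_left hx₁
            (srel_of_cgt d₁)) (.trans hy₁ hy)
          -- re-pack: we need the measure of the *given* d₁, so apply directly
          exact iho (mCg d₁) (hmo ▸ hm) x₁ u₁ v₁ hx₁ d₁ (.trans hy₁ hy) rfl hdx₁
    exact inner (mCg d) x u v hx d hy rfl hdx

/-- The candidate relation transfers divergence. -/
lemma srel_div {x y} (hsx : SRel R x y) (hdx : Divergent x) : Divergent y := by
  by_contra hnd
  exact srel_div_key hR y (acc_transGen' (acc_of_not_div hnd)) hnd x hsx hdx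

/-- The candidate relation satisfies the weak transfer property. -/
lemma srel_step_full {P Q α P'} (hs : SRel R P Q) (hstep : Step P α P') :
    ∃ Q', WeakHat Q α Q' ∧ SRel R P' Q' := by
  obtain ⟨u, v, hP, ⟨d⟩, hQ⟩ := hs
  obtain ⟨u', hs', hscb'⟩ := scb_step hP hstep
  cases α with
  | tau =>
    obtain ⟨w, hts, hsr⟩ := tauT hR d hs'
    obtain ⟨Q', hts2, hscbw⟩ := scb_taus hQ hts
    exact ⟨Q', hts2, srel_scb_right (srel_scb_left hscb' hsr) hscbw⟩
  | inp a =>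
    obtain ⟨w, hws, hsr⟩ := vis hR d hs' inp_ne_tau
    obtain ⟨Q', hws2, hscbw⟩ := scb_wk hQ hws
    exact ⟨Q', hws2, srel_scb_right (srel_scb_left hscb' hsr) hscbw⟩
  | out a =>
    obtain ⟨w, hws, hsr⟩ := vis hR d hs' out_ne_tau
    obtain ⟨Q', hws2, hscbw⟩ := scb_wk hQ hws
    exact ⟨Q', hws2, srel_scb_right (srel_scb_left hscb' hsr) hscbw⟩

lemma srel_weak_bisim : IsWeakBisim (SRel R) := by
  refine ⟨fun x y h => srel_symm hR.1 h, fun x y h => ?_, fun x y h α x' hs =>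
    srel_step_full hR h hs⟩
  exact ⟨srel_div hR h, srel_div hR (srel_symm hR.1 h)⟩

end MainProof

end UPC

/-- a weak bisimulation up-to context is contained in weak bisimilarity. -/
theorem weak_bisim_upto_ctx_sound (R : Proc → Proc → Prop)
    (h : IsWeakBisimUptoCtx R) : ∀ P Q, R P Q → WBisim P Q := by
  intro P Q hPQ
  exact ⟨UPC.SRel R, UPC.srel_weak_bisim h,
    ⟨P, Q, .refl P, ⟨.base hPQ⟩, .refl Q⟩⟩
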